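/- arXiv:1807.04123 — 2 statements merged into one kernel-verified Lean document; each statement's English description precedes it below -/
import Mathlib

section
/- Let η > 0, T > 0, and let u, p be smooth, spatially ℤⁿ-periodic with div u_t = 0, solving the incompressible Navier–Stokes equation ∂_t u = −∇_u u − ∇p + ηΔu on [0,T] × ℝⁿ. Then the kinetic energy E_t = ½ ∫_{[0,1]ⁿ} |u(t,x)|² dx satisfies d/dt E_t = −η ∫_{[0,1]ⁿ} |Du(t,x)|² dx ≤ 0, where |Du|² is the squared Frobenius norm of the spatial Jacobian; in particular t ↦ E_t is monotone nonincreasing on [0,T]. -/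
noncomputable section
open MeasureTheory

/-- Euclidean dot product on `Fin n → ℝ`. -/
def dotp {n : ℕ} (v w : Fin n → ℝ) : ℝ := ∑ i, v i * w i

/-- Advective derivative `(∇_X ξ)(x) = Dξ(x)·X(x)`. -/
def advDeriv {n : ℕ} (X ξ : (Fin n → ℝ) → (Fin n → ℝ)) (x : Fin n → ℝ) : Fin n → ℝ :=
  fderiv ℝ ξ x (X x)

/-- Line stretching term `(X'⊗ξ)(x) = (DX(x))ᵀ·ξ(x)`. -/
def lineStretch {n : ℕ} (X ξ : (Fin n → ℝ) → (Fin n → ℝ)) (x : Fin n → ℝ) : Fin n → ℝ :=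
  fun i => ∑ j, fderiv ℝ X x (Pi.single i 1) j * ξ x j

/-- Divergence of a vector field. -/
def diver {n : ℕ} (ξ : (Fin n → ℝ) → (Fin n → ℝ)) (x : Fin n → ℝ) : ℝ :=
  ∑ i, fderiv ℝ ξ x (Pi.single i 1) i

/-- Gradient of a scalar function. -/
def gradf {n : ℕ} (f : (Fin n → ℝ) → ℝ) (x : Fin n → ℝ) : Fin n → ℝ :=
  fun i => fderiv ℝ f x (Pi.single i 1)

/-- Componentwise Laplacian. -/
def lap {n : ℕ} (ξ : (Fin n → ℝ) → (Fin n → ℝ)) (x : Fin n → ℝ) : Fin n → ℝ :=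
  ∑ j, fderiv ℝ (fun y => fderiv ℝ ξ y (Pi.single j 1)) x (Pi.single j 1)

/-- The unit cube `[0,1]ⁿ`, realizing the torus `ℝⁿ/ℤⁿ`. -/
def cube (n : ℕ) : Set (Fin n → ℝ) := Set.univ.pi fun _ => Set.Icc (0:ℝ) 1

/-- `ℤⁿ`-periodicity. -/
def ZPeriodic {n : ℕ} {α : Type*} (f : (Fin n → ℝ) → α) : Prop :=
  ∀ (x : Fin n → ℝ) (m : Fin n → ℤ), f (x + fun i => (m i : ℝ)) = f x

-- helpers
lemma fderiv_proj {n m : ℕ} {g : (Fin n → ℝ) → (Fin m → ℝ)} {x : Fin n → ℝ}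
    (hg : DifferentiableAt ℝ g x) (i : Fin m) (d : Fin n → ℝ) :
    fderiv ℝ (fun y => g y i) x d = fderiv ℝ g x d i := by
  have h := (ContinuousLinearMap.proj (R := ℝ) (φ := fun _ : Fin m => ℝ) i).hasFDerivAt.comp x hg.hasFDerivAt
  have h2 : (fun y => g y i) = (⇑(ContinuousLinearMap.proj (R := ℝ) (φ := fun _ : Fin m => ℝ) i) ∘ g) := rfl
  rw [h2, h.fderiv]; rfl

lemma fderiv_mul_apply' {n : ℕ} {a b : (Fin n → ℝ) → ℝ} {x : Fin n → ℝ}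
    (ha : DifferentiableAt ℝ a x) (hb : DifferentiableAt ℝ b x) (d : Fin n → ℝ) :
    fderiv ℝ (fun y => a y * b y) x d = a x * fderiv ℝ b x d + b x * fderiv ℝ a x d := by
  rw [fderiv_fun_mul ha hb]; simp

lemma clm_apply_sum {n m : ℕ} (L : (Fin n → ℝ) →L[ℝ] (Fin m → ℝ)) (w : Fin n → ℝ) :
    L w = ∑ j, w j • L (Pi.single j 1) := by
  have hw : w = ∑ j, w j • (Pi.single j 1 : Fin n → ℝ) := by
    conv_lhs => rw [pi_eq_sum_univ w]
    congr 1; funext j; congr 1; funext k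
    simp [Pi.single_apply, eq_comm]
  conv_lhs => rw [hw]
  rw [map_sum]
  congr 1; funext j; rw [L.map_smul]

lemma cube_eq_Icc (n : ℕ) : cube n = Set.Icc (0 : Fin n → ℝ) 1 := by
  rw [cube, ← Set.pi_univ_Icc]; rfl

lemma zper_fderiv {n m : ℕ} {f : (Fin n → ℝ) → (Fin m → ℝ)}
    (hf : Differentiable ℝ f) (hper : ZPeriodic f) :
    ZPeriodic (fun y => fderiv ℝ f y) := by
  intro x mm
  set c : Fin n → ℝ := fun i => ((mm i : ℝ)) with hc
  have h1 : HasFDerivAt (fun y : Fin n → ℝ => y + c) (ContinuousLinearMap.id ℝ (Fin n → ℝ)) x := by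
    simpa using ((hasFDerivAt_id (𝕜 := ℝ) x).add_const c)
  have h2 : HasFDerivAt (fun y => f (y + c)) ((fderiv ℝ f (x + c)).comp (ContinuousLinearMap.id ℝ (Fin n → ℝ))) x :=
    (hf (x + c)).hasFDerivAt.comp x h1
  have h3 : (fun y => f (y + c)) = f := funext fun y => hper y mm
  rw [h3] at h2
  simp only [ContinuousLinearMap.comp_id] at h2
  show fderiv ℝ f (x + c) = fderiv ℝ f x
  rw [← h2.fderiv]

lemma integral_diver_eq_zero {n : ℕ} {f : (Fin n → ℝ) → (Fin n → ℝ)}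
    (hf : ContDiff ℝ 1 f) (hper : ZPeriodic f) :
    ∫ x in cube n, diver f x = 0 := by
  cases n with
  | zero =>
    have h0 : ∀ x, diver f x = 0 := fun x => by simp [diver]
    simp [h0]
  | succ m =>
    rw [cube_eq_Icc]
    have hle : (0 : Fin (m+1) → ℝ) ≤ 1 := fun i => zero_le_one
    have hdiff : Differentiable ℝ f := hf.differentiable one_ne_zero
    have hcd : Continuous (fun x => fderiv ℝ f x) := hf.continuous_fderiv one_ne_zero
    have hci : Continuous (fun x => ∑ i, fderiv ℝ f x (Pi.single i 1) i) := by
      apply continuous_finset_sum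
      intro i _
      exact (continuous_apply i).comp (hcd.clm_apply continuous_const)
    have Hi : IntegrableOn (fun x => ∑ i, fderiv ℝ f x (Pi.single i 1) i)
        (Set.Icc (0 : Fin (m+1) → ℝ) 1) := hci.integrableOn_Icc
    have key := MeasureTheory.integral_divergence_of_hasFDerivAt_off_countable
      (a := (0 : Fin (m+1) → ℝ)) (b := 1) hle f (fun x => fderiv ℝ f x) ∅ Set.countable_empty
      hf.continuous.continuousOn
      (fun x _ => (hdiff x).hasFDerivAt) Hi
    have hfb : ∀ (i : Fin (m+1)) (x : Fin m → ℝ),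
        f (i.insertNth ((1 : Fin (m+1) → ℝ) i) x) = f (i.insertNth ((0 : Fin (m+1) → ℝ) i) x) := by
      intro i x
      have harg : i.insertNth ((1 : Fin (m+1) → ℝ) i) x
          = i.insertNth ((0 : Fin (m+1) → ℝ) i) x
            + fun j => (((Pi.single i 1 : Fin (m+1) → ℤ) j : ℝ)) := by
        funext j
        refine Fin.succAboveCases i ?_ ?_ j
        · simp
        · intro k
          simp [Fin.insertNth_apply_succAbove, Pi.single_apply,
            Fin.succAbove_ne i k]
      rw [harg, hper]
    have : ∀ i : Fin (m+1),
        ((∫ x in Set.Icc ((0:Fin (m+1)→ℝ) ∘ i.succAbove) ((1:Fin (m+1)→ℝ) ∘ i.succAbove),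
            f (i.insertNth ((1:Fin (m+1)→ℝ) i) x) i)
          - ∫ x in Set.Icc ((0:Fin (m+1)→ℝ) ∘ i.succAbove) ((1:Fin (m+1)→ℝ) ∘ i.succAbove),
            f (i.insertNth ((0:Fin (m+1)→ℝ) i) x) i) = 0 := by
      intro i
      rw [sub_eq_zero]
      congr 1
      funext x
      rw [hfb]
    rw [show (fun x => diver f x) = fun x => ∑ i, fderiv ℝ f x (Pi.single i 1) i from rfl]
    rw [key, Finset.sum_eq_zero fun i _ => this i]

-- dotp basics
lemma dotp_nonneg {n : ℕ} (v : Fin n → ℝ) : 0 ≤ dotp v v :=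
  Finset.sum_nonneg fun i _ => mul_self_nonneg _

lemma dotp_comb {n : ℕ} (η : ℝ) (v a b c : Fin n → ℝ) :
    dotp v (-a - b + η • c) = -dotp v a - dotp v b + η * dotp v c := by
  simp only [dotp, Finset.mul_sum, ← Finset.sum_add_distrib, ← Finset.sum_sub_distrib,
    ← Finset.sum_neg_distrib]
  refine Finset.sum_congr rfl fun i _ => ?_
  simp [Pi.add_apply, Pi.sub_apply, Pi.neg_apply, Pi.smul_apply, smul_eq_mul]
  ring

section pointwise
variable {n : ℕ} {v : (Fin n → ℝ) → (Fin n → ℝ)}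

lemma advDeriv_expand (hvd : Differentiable ℝ v) (x : Fin n → ℝ) (i : Fin n) :
    advDeriv v v x i = ∑ j, v x j * fderiv ℝ v x (Pi.single j 1) i := by
  rw [advDeriv, clm_apply_sum (fderiv ℝ v x) (v x)]
  rw [Finset.sum_apply]
  refine Finset.sum_congr rfl fun j _ => ?_
  simp

lemma diver_smul {c : (Fin n → ℝ) → ℝ} (hc : Differentiable ℝ c)
    (hvd : Differentiable ℝ v) (x : Fin n → ℝ) :
    diver (fun y => c y • v y) x
      = c x * diver v x + ∑ i, fderiv ℝ c x (Pi.single i 1) * v x i := by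
  unfold diver
  have hw : ∀ y, DifferentiableAt ℝ (fun z => c z • v z) y := fun y => (hc y).smul (hvd y)
  have step : ∀ i : Fin n, fderiv ℝ (fun y => c y • v y) x (Pi.single i 1) i
      = c x * fderiv ℝ (fun y => v y i) x (Pi.single i 1)
        + fderiv ℝ c x (Pi.single i 1) * v x i := by
    intro i
    rw [← fderiv_proj (hw x) i (Pi.single i 1)]
    have : (fun y => (c y • v y) i) = fun y => c y * v y i := rfl
    rw [this, fderiv_mul_apply' (hc x) (differentiable_pi.mp hvd i x)]
    ring
  rw [Finset.sum_congr rfl fun i _ => step i, Finset.sum_add_distrib, Finset.mul_sum]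
  congr 1
  refine Finset.sum_congr rfl fun i _ => ?_
  rw [fderiv_proj (hvd x) i]

lemma fderiv_dotp_self (hvd : Differentiable ℝ v) (x d : Fin n → ℝ) :
    fderiv ℝ (fun y => dotp (v y) (v y)) x d = 2 * ∑ j, v x j * fderiv ℝ v x d j := by
  unfold dotp
  have hj : ∀ j : Fin n, DifferentiableAt ℝ (fun y => v y j * v y j) x :=
    fun j => (differentiable_pi.mp hvd j x).mul (differentiable_pi.mp hvd j x)
  rw [fderiv_fun_sum fun j _ => hj j]
  rw [ContinuousLinearMap.sum_apply]
  rw [Finset.mul_sum, Finset.sum_congr rfl fun j _ => ?_]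
  rw [fderiv_mul_apply' (differentiable_pi.mp hvd j x) (differentiable_pi.mp hvd j x),
    fderiv_proj (hvd x) j]
  ring
end pointwise

lemma top_le1 : (1 : WithTop ℕ∞) ≤ ((⊤:ℕ∞) : WithTop ℕ∞) := by
  exact_mod_cast le_top
lemma top_ne0 : ((⊤:ℕ∞) : WithTop ℕ∞) ≠ 0 :=
  (lt_of_lt_of_le zero_lt_one top_le1).ne'
lemma top_succ_le : ((⊤:ℕ∞) : WithTop ℕ∞) + 1 ≤ ((⊤:ℕ∞) : WithTop ℕ∞) := by
  exact_mod_cast le_top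

section pointwise2
variable {n : ℕ} {v : (Fin n → ℝ) → (Fin n → ℝ)}

lemma diver_w3 (hv : ContDiff ℝ (⊤:ℕ∞) v) (x : Fin n → ℝ) :
    diver (fun y => fun i => dotp (v y) (fderiv ℝ v y (Pi.single i 1))) x
      = (∑ i, dotp (fderiv ℝ v x (Pi.single i 1)) (fderiv ℝ v x (Pi.single i 1)))
        + dotp (v x) (lap v x) := by
  have hvd : Differentiable ℝ v := hv.differentiable top_ne0
  have hfv : ContDiff ℝ (⊤:ℕ∞) (fun y => fderiv ℝ v y) := hv.fderiv_right top_succ_le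
  have hfvi : ∀ d : Fin n → ℝ, Differentiable ℝ (fun y => fderiv ℝ v y d) := fun d => by
    exact ((ContinuousLinearMap.apply ℝ (Fin n → ℝ) d).contDiff.comp hfv).differentiable top_ne0
  set w₃ : (Fin n → ℝ) → (Fin n → ℝ) :=
    fun y => fun i => dotp (v y) (fderiv ℝ v y (Pi.single i 1)) with hw₃
  have hwcomp : ∀ i : Fin n, (fun y => w₃ y i)
      = fun y => ∑ j, v y j * fderiv ℝ v y (Pi.single i 1) j := fun i => rfl
  have hwd : Differentiable ℝ w₃ := by
    apply differentiable_pi''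
    intro i
    rw [hwcomp i]
    exact Differentiable.fun_sum fun j _ =>
      (differentiable_pi.mp hvd j).mul (differentiable_pi.mp (hfvi (Pi.single i 1)) j)
  have step : ∀ i : Fin n, fderiv ℝ w₃ x (Pi.single i 1) i
      = ∑ j, (v x j * fderiv ℝ (fun y => fderiv ℝ v y (Pi.single i 1)) x (Pi.single i 1) j
        + fderiv ℝ v x (Pi.single i 1) j * fderiv ℝ v x (Pi.single i 1) j) := by
    intro i
    rw [← fderiv_proj (hwd x) i (Pi.single i 1), hwcomp i]
    have hterm : ∀ j : Fin n, DifferentiableAt ℝ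
        (fun y => v y j * fderiv ℝ v y (Pi.single i 1) j) x :=
      fun j => ((differentiable_pi.mp hvd j) x).mul
        ((differentiable_pi.mp (hfvi (Pi.single i 1)) j) x)
    rw [fderiv_fun_sum fun j _ => hterm j, ContinuousLinearMap.sum_apply]
    refine Finset.sum_congr rfl fun j _ => ?_
    rw [fderiv_mul_apply' ((differentiable_pi.mp hvd j) x)
      ((differentiable_pi.mp (hfvi (Pi.single i 1)) j) x)]
    rw [fderiv_proj (hvd x) j, fderiv_proj (hfvi (Pi.single i 1) x) j]
  unfold diver
  rw [Finset.sum_congr rfl fun i _ => step i]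
  rw [Finset.sum_congr rfl fun i _ => Finset.sum_add_distrib (s := Finset.univ)]
  rw [Finset.sum_add_distrib]
  have h1 : (∑ i : Fin n, ∑ j : Fin n,
        fderiv ℝ v x (Pi.single i 1) j * fderiv ℝ v x (Pi.single i 1) j)
      = ∑ i, dotp (fderiv ℝ v x (Pi.single i 1)) (fderiv ℝ v x (Pi.single i 1)) := rfl
  have h2 : (∑ i : Fin n, ∑ j : Fin n,
        v x j * fderiv ℝ (fun y => fderiv ℝ v y (Pi.single i 1)) x (Pi.single i 1) j)
      = dotp (v x) (lap v x) := by
    rw [Finset.sum_comm]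
    unfold dotp
    refine Finset.sum_congr rfl fun j _ => ?_
    unfold lap
    rw [Finset.sum_apply, Finset.mul_sum]
  rw [h1, h2, add_comm]
end pointwise2

lemma continuous_diver {n : ℕ} {w : (Fin n → ℝ) → (Fin n → ℝ)} (hw : ContDiff ℝ 1 w) :
    Continuous (fun x => diver w x) := by
  have hcd : Continuous (fun x => fderiv ℝ w x) := hw.continuous_fderiv one_ne_zero
  apply continuous_finset_sum
  intro i _
  exact (continuous_apply i).comp (hcd.clm_apply continuous_const)

lemma isCompact_cube (n : ℕ) : IsCompact (cube n) := by
  rw [cube_eq_Icc]; exact isCompact_Icc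

lemma spatial_identity {n : ℕ} (η : ℝ) {v : (Fin n → ℝ) → (Fin n → ℝ)}
    {q : (Fin n → ℝ) → ℝ}
    (hv : ContDiff ℝ (⊤:ℕ∞) v) (hq : ContDiff ℝ (⊤:ℕ∞) q)
    (hvper : ZPeriodic v) (hqper : ZPeriodic q) (hdiv : ∀ x, diver v x = 0) :
    ∫ x in cube n, dotp (v x) (-advDeriv v v x - gradf q x + η • lap v x)
      = -(η * ∫ x in cube n, ∑ i, dotp (fderiv ℝ v x (Pi.single i 1))
            (fderiv ℝ v x (Pi.single i 1))) := by
  have hvd : Differentiable ℝ v := hv.differentiable top_ne0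
  have hqd : Differentiable ℝ q := hq.differentiable top_ne0
  have hfv : ContDiff ℝ (⊤:ℕ∞) (fun y => fderiv ℝ v y) := hv.fderiv_right top_succ_le
  have hfvi : ∀ d : Fin n → ℝ, ContDiff ℝ (⊤:ℕ∞) (fun y => fderiv ℝ v y d) := fun d => by
    exact (ContinuousLinearMap.apply ℝ (Fin n → ℝ) d).contDiff.comp hfv
  have hc : ContDiff ℝ (⊤:ℕ∞) (fun y => dotp (v y) (v y)) :=
    ContDiff.sum fun j _ => (contDiff_pi.mp hv j).mul (contDiff_pi.mp hv j)
  set w₁ : (Fin n → ℝ) → (Fin n → ℝ) := fun y => dotp (v y) (v y) • v y with hw₁def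
  set w₂ : (Fin n → ℝ) → (Fin n → ℝ) := fun y => q y • v y with hw₂def
  set w₃ : (Fin n → ℝ) → (Fin n → ℝ) :=
    fun y => fun i => dotp (v y) (fderiv ℝ v y (Pi.single i 1)) with hw₃def
  -- pointwise identities
  have hd1 : ∀ x, dotp (v x) (advDeriv v v x) = (1/2) * diver w₁ x := by
    intro x
    rw [hw₁def]
    rw [diver_smul (hc.differentiable top_ne0) hvd x, hdiv x, mul_zero, zero_add]
    have e1 : ∀ i : Fin n, fderiv ℝ (fun y => dotp (v y) (v y)) x (Pi.single i 1) * v x i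
        = ∑ j, 2 * (v x j * fderiv ℝ v x (Pi.single i 1) j * v x i) := by
      intro i
      rw [fderiv_dotp_self hvd, Finset.mul_sum, Finset.sum_mul]
      exact Finset.sum_congr rfl fun j _ => by ring
    rw [Finset.sum_congr rfl fun i _ => e1 i, Finset.sum_comm]
    unfold dotp
    rw [Finset.mul_sum]
    refine Finset.sum_congr rfl fun i _ => ?_
    rw [advDeriv_expand hvd, Finset.mul_sum, Finset.mul_sum]
    refine Finset.sum_congr rfl fun j _ => ?_
    ring
  have hd2 : ∀ x, dotp (v x) (gradf q x) = diver w₂ x := by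
    intro x
    rw [hw₂def, diver_smul hqd hvd x, hdiv x, mul_zero, zero_add]
    unfold dotp gradf
    exact Finset.sum_congr rfl fun i _ => by ring
  have hd3 : ∀ x, dotp (v x) (lap v x) = diver w₃ x
      - ∑ i, dotp (fderiv ℝ v x (Pi.single i 1)) (fderiv ℝ v x (Pi.single i 1)) := by
    intro x
    rw [hw₃def, diver_w3 hv x]
    ring
  have hpt : ∀ x, dotp (v x) (-advDeriv v v x - gradf q x + η • lap v x)
      = -(1/2) * diver w₁ x - diver w₂ x + η * diver w₃ x
        - η * ∑ i, dotp (fderiv ℝ v x (Pi.single i 1)) (fderiv ℝ v x (Pi.single i 1)) := by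
    intro x
    rw [dotp_comb, hd1 x, hd2 x, hd3 x]
    ring
  -- smoothness and periodicity of the auxiliary fields
  have hw₁s : ContDiff ℝ 1 w₁ := (hc.smul hv).of_le top_le1
  have hw₂s : ContDiff ℝ 1 w₂ := (hq.smul hv).of_le top_le1
  have hw₃s : ContDiff ℝ 1 w₃ := by
    refine (contDiff_pi.mpr fun i => ?_).of_le top_le1
    exact ContDiff.sum fun j _ =>
      (contDiff_pi.mp hv j).mul (contDiff_pi.mp (hfvi (Pi.single i 1)) j)
  have hfp : ∀ (x : Fin n → ℝ) (m : Fin n → ℤ),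
      fderiv ℝ v (x + fun i => (m i : ℝ)) = fderiv ℝ v x := zper_fderiv hvd hvper
  have hp₁ : ZPeriodic w₁ := by
    intro x m; rw [hw₁def]; simp only [hvper x m]
  have hp₂ : ZPeriodic w₂ := by
    intro x m; rw [hw₂def]; simp only [hvper x m, hqper x m]
  have hp₃ : ZPeriodic w₃ := by
    intro x m; rw [hw₃def]; simp only [hvper x m, hfp x m]
  have hz₁ := integral_diver_eq_zero hw₁s hp₁
  have hz₂ := integral_diver_eq_zero hw₂s hp₂
  have hz₃ := integral_diver_eq_zero hw₃s hp₃
  -- integrability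
  have hK := isCompact_cube n
  have hi₁ : IntegrableOn (fun x => diver w₁ x) (cube n) :=
    (continuous_diver hw₁s).continuousOn.integrableOn_compact hK
  have hi₂ : IntegrableOn (fun x => diver w₂ x) (cube n) :=
    (continuous_diver hw₂s).continuousOn.integrableOn_compact hK
  have hi₃ : IntegrableOn (fun x => diver w₃ x) (cube n) :=
    (continuous_diver hw₃s).continuousOn.integrableOn_compact hK
  have hDensC : Continuous (fun x => ∑ i, dotp (fderiv ℝ v x (Pi.single i 1))
      (fderiv ℝ v x (Pi.single i 1))) := by
    apply continuous_finset_sum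
    intro i _
    apply continuous_finset_sum
    intro j _
    exact (((hfvi (Pi.single i 1)).continuous.comp continuous_id).comp continuous_id
      |>.comp continuous_id |> fun h => h) |>.comp continuous_id |>.comp continuous_id
      |>.comp continuous_id |>.comp continuous_id |>.comp continuous_id |>.comp continuous_id
      |>.comp continuous_id |>.comp continuous_id |>.comp continuous_id
      |> fun _ => ((continuous_apply j).comp (hfvi (Pi.single i 1)).continuous).mul
        ((continuous_apply j).comp (hfvi (Pi.single i 1)).continuous)
  have hiD : IntegrableOn (fun x => ∑ i, dotp (fderiv ℝ v x (Pi.single i 1))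
      (fderiv ℝ v x (Pi.single i 1))) (cube n) :=
    hDensC.continuousOn.integrableOn_compact hK
  calc ∫ x in cube n, dotp (v x) (-advDeriv v v x - gradf q x + η • lap v x)
      = ∫ x in cube n, (-(1/2) * diver w₁ x - diver w₂ x + η * diver w₃ x
          - η * ∑ i, dotp (fderiv ℝ v x (Pi.single i 1)) (fderiv ℝ v x (Pi.single i 1))) := by
        exact integral_congr_ae (Filter.Eventually.of_forall fun x => hpt x)
    _ = -(η * ∫ x in cube n, ∑ i, dotp (fderiv ℝ v x (Pi.single i 1))
          (fderiv ℝ v x (Pi.single i 1))) := by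
        have hiA : Integrable (fun x => -(1/2) * diver w₁ x) (volume.restrict (cube n)) :=
          hi₁.const_mul _
        have hiB : Integrable (fun x => -(1/2) * diver w₁ x - diver w₂ x)
            (volume.restrict (cube n)) := by exact hiA.sub hi₂
        have hiC : Integrable (fun x => η * diver w₃ x) (volume.restrict (cube n)) :=
          hi₃.const_mul _
        have hiL : Integrable
            (fun x => -(1/2) * diver w₁ x - diver w₂ x + η * diver w₃ x)
            (volume.restrict (cube n)) := by exact hiB.add hiC
        have hiR : Integrable (fun x => η * ∑ i, dotp (fderiv ℝ v x (Pi.single i 1))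
            (fderiv ℝ v x (Pi.single i 1))) (volume.restrict (cube n)) := hiD.const_mul _
        rw [integral_sub hiL hiR, integral_add hiB hiC, integral_sub hiA hi₂]
        rw [integral_const_mul, integral_const_mul, integral_const_mul, hz₁, hz₂, hz₃]
        ring

section slice
variable {n : ℕ} {T : ℝ} {E' : Type*} [NormedAddCommGroup E'] [NormedSpace ℝ E']

lemma omega_uniqueDiff (hT : 0 < T) :
    UniqueDiffOn ℝ ((Set.Icc (0:ℝ) T) ×ˢ (Set.univ : Set (Fin n → ℝ))) :=
  (uniqueDiffOn_Icc hT).prod uniqueDiffOn_univ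

lemma slice_hasFDerivAt {F : ℝ × (Fin n → ℝ) → E'}
    (hF : DifferentiableOn ℝ F ((Set.Icc (0:ℝ) T) ×ˢ (Set.univ : Set (Fin n → ℝ))))
    {t : ℝ} (ht : t ∈ Set.Icc (0:ℝ) T) (x : Fin n → ℝ) :
    HasFDerivAt (fun y => F (t, y))
      ((fderivWithin ℝ F ((Set.Icc (0:ℝ) T) ×ˢ (Set.univ : Set (Fin n → ℝ))) (t, x)).comp
        (((0 : (Fin n → ℝ) →L[ℝ] ℝ)).prod (ContinuousLinearMap.id ℝ (Fin n → ℝ)))) x := by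
  set Ω := (Set.Icc (0:ℝ) T) ×ˢ (Set.univ : Set (Fin n → ℝ)) with hΩdef
  have hmem : (t, x) ∈ Ω := ⟨ht, trivial⟩
  have h1 : HasFDerivWithinAt F (fderivWithin ℝ F Ω (t, x)) Ω (t, x) :=
    (hF (t, x) hmem).hasFDerivWithinAt
  have h2 : HasFDerivAt (fun y : Fin n → ℝ => ((t, y) : ℝ × (Fin n → ℝ)))
      (((0 : (Fin n → ℝ) →L[ℝ] ℝ)).prod (ContinuousLinearMap.id ℝ (Fin n → ℝ))) x :=
    (hasFDerivAt_const t x).prodMk (hasFDerivAt_id x)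
  have hmaps : Set.MapsTo (fun y : Fin n → ℝ => ((t, y) : ℝ × (Fin n → ℝ)))
      Set.univ Ω := fun y _ => ⟨ht, trivial⟩
  have h3 := h1.comp x (h2.hasFDerivWithinAt (s := Set.univ)) hmaps
  rw [← hasFDerivWithinAt_univ]
  exact h3

lemma slice_fderiv_apply {F : ℝ × (Fin n → ℝ) → E'}
    (hF : DifferentiableOn ℝ F ((Set.Icc (0:ℝ) T) ×ˢ (Set.univ : Set (Fin n → ℝ))))
    {t : ℝ} (ht : t ∈ Set.Icc (0:ℝ) T) (x d : Fin n → ℝ) :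
    fderiv ℝ (fun y => F (t, y)) x d
      = fderivWithin ℝ F ((Set.Icc (0:ℝ) T) ×ˢ (Set.univ : Set (Fin n → ℝ))) (t, x) (0, d) := by
  rw [(slice_hasFDerivAt hF ht x).fderiv]
  rfl

lemma tslice_hasDerivWithinAt {F : ℝ × (Fin n → ℝ) → E'}
    (hF : DifferentiableOn ℝ F ((Set.Icc (0:ℝ) T) ×ˢ (Set.univ : Set (Fin n → ℝ))))
    {t : ℝ} (ht : t ∈ Set.Icc (0:ℝ) T) (x : Fin n → ℝ) :
    HasDerivWithinAt (fun τ => F (τ, x))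
      (fderivWithin ℝ F ((Set.Icc (0:ℝ) T) ×ˢ (Set.univ : Set (Fin n → ℝ))) (t, x) (1, 0))
      (Set.Icc (0:ℝ) T) t := by
  set Ω := (Set.Icc (0:ℝ) T) ×ˢ (Set.univ : Set (Fin n → ℝ)) with hΩdef
  have hmem : (t, x) ∈ Ω := ⟨ht, trivial⟩
  have h1 : HasFDerivWithinAt F (fderivWithin ℝ F Ω (t, x)) Ω (t, x) :=
    (hF (t, x) hmem).hasFDerivWithinAt
  have hc : HasDerivWithinAt (fun τ : ℝ => ((τ, x) : ℝ × (Fin n → ℝ)))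
      ((1:ℝ), (0 : Fin n → ℝ)) (Set.Icc (0:ℝ) T) t :=
    (hasDerivWithinAt_id t _).prodMk (hasDerivWithinAt_const t _ x)
  have hmaps : Set.MapsTo (fun τ : ℝ => ((τ, x) : ℝ × (Fin n → ℝ)))
      (Set.Icc (0:ℝ) T) Ω := fun τ hτ => ⟨hτ, trivial⟩
  exact h1.comp_hasDerivWithinAt t hc hmaps

lemma slice_contDiff {F : ℝ × (Fin n → ℝ) → E'}
    (hF : ContDiffOn ℝ (⊤:ℕ∞) F ((Set.Icc (0:ℝ) T) ×ˢ (Set.univ : Set (Fin n → ℝ))))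
    {t : ℝ} (ht : t ∈ Set.Icc (0:ℝ) T) :
    ContDiff ℝ (⊤:ℕ∞) (fun y => F (t, y)) := by
  rw [← contDiffOn_univ]
  refine hF.comp ((contDiff_const.prodMk contDiff_id).contDiffOn) ?_
  exact fun y _ => ⟨ht, trivial⟩
end slice

/-- kinetic energy dissipation for smooth periodic solutions of
the incompressible Navier–Stokes equation:
`d/dt E_t = −η ∫ |Du|² ≤ 0`, and `E` is nonincreasing on `[0,T]`. -/
theorem stmt15 {n : ℕ} (η T : ℝ) (hη : 0 < η) (hT : 0 < T)
    (u : ℝ → (Fin n → ℝ) → (Fin n → ℝ)) (p : ℝ → (Fin n → ℝ) → ℝ)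
    (hu : ContDiffOn ℝ (⊤:ℕ∞) (fun z : ℝ × (Fin n → ℝ) => u z.1 z.2)
      (Set.Icc 0 T ×ˢ Set.univ))
    (hp : ContDiffOn ℝ (⊤:ℕ∞) (fun z : ℝ × (Fin n → ℝ) => p z.1 z.2)
      (Set.Icc 0 T ×ˢ Set.univ))
    (hup : ∀ t ∈ Set.Icc (0:ℝ) T, ZPeriodic (u t))
    (hpp : ∀ t ∈ Set.Icc (0:ℝ) T, ZPeriodic (p t))
    (hdivu : ∀ t ∈ Set.Icc (0:ℝ) T, ∀ x, diver (u t) x = 0)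
    (hNSE : ∀ t ∈ Set.Icc (0:ℝ) T, ∀ x,
      derivWithin (fun τ => u τ x) (Set.Icc 0 T) t
        = -advDeriv (u t) (u t) x - gradf (p t) x + η • lap (u t) x) :
    (∀ t ∈ Set.Icc (0:ℝ) T,
      HasDerivWithinAt (fun τ => (1/2 : ℝ) * ∫ x in cube n, dotp (u τ x) (u τ x))
        (-(η * ∫ x in cube n, ∑ i, dotp (fderiv ℝ (u t) x (Pi.single i 1))
              (fderiv ℝ (u t) x (Pi.single i 1))))
        (Set.Icc 0 T) t
      ∧ -(η * ∫ x in cube n, ∑ i, dotp (fderiv ℝ (u t) x (Pi.single i 1))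
              (fderiv ℝ (u t) x (Pi.single i 1))) ≤ 0) ∧
    (∀ t₁ ∈ Set.Icc (0:ℝ) T, ∀ t₂ ∈ Set.Icc (0:ℝ) T, t₁ ≤ t₂ →
      (1/2 : ℝ) * ∫ x in cube n, dotp (u t₂ x) (u t₂ x)
        ≤ (1/2 : ℝ) * ∫ x in cube n, dotp (u t₁ x) (u t₁ x)) := by
  
  have h0S : (0:ℝ) ∈ Set.Icc (0:ℝ) T := ⟨le_refl 0, hT.le⟩
  have hΩu : UniqueDiffOn ℝ ((Set.Icc (0:ℝ) T) ×ˢ (Set.univ : Set (Fin n → ℝ))) :=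
    omega_uniqueDiff hT
  have hK := isCompact_cube n
  have hKm : MeasurableSet (cube n) := by rw [cube_eq_Icc]; exact measurableSet_Icc
  have hut : ∀ t ∈ Set.Icc (0:ℝ) T, ContDiff ℝ (⊤:ℕ∞) (u t) := fun t ht =>
    slice_contDiff hu ht
  have hpt : ∀ t ∈ Set.Icc (0:ℝ) T, ContDiff ℝ (⊤:ℕ∞) (p t) := fun t ht =>
    slice_contDiff hp ht
  have hUdiff : DifferentiableOn ℝ (fun z : ℝ × (Fin n → ℝ) => u z.1 z.2)
      ((Set.Icc (0:ℝ) T) ×ˢ (Set.univ : Set (Fin n → ℝ))) := hu.differentiableOn top_ne0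
  have hPdiff : DifferentiableOn ℝ (fun z : ℝ × (Fin n → ℝ) => p z.1 z.2)
      ((Set.Icc (0:ℝ) T) ×ˢ (Set.univ : Set (Fin n → ℝ))) := hp.differentiableOn top_ne0
  set DU := fderivWithin ℝ (fun z : ℝ × (Fin n → ℝ) => u z.1 z.2)
    ((Set.Icc (0:ℝ) T) ×ˢ (Set.univ : Set (Fin n → ℝ))) with hDUdef
  set DP := fderivWithin ℝ (fun z : ℝ × (Fin n → ℝ) => p z.1 z.2)
    ((Set.Icc (0:ℝ) T) ×ˢ (Set.univ : Set (Fin n → ℝ))) with hDPdef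
  set W : Fin n → (ℝ × (Fin n → ℝ)) → (Fin n → ℝ) :=
    fun j z => DU z ((0:ℝ), Pi.single j 1) with hWdef
  set DW : Fin n → (ℝ × (Fin n → ℝ)) →
      (ℝ × (Fin n → ℝ)) →L[ℝ] (Fin n → ℝ) :=
    fun j => fderivWithin ℝ (W j) ((Set.Icc (0:ℝ) T) ×ˢ (Set.univ : Set (Fin n → ℝ)))
      with hDWdef
  set Rj : ℝ × (Fin n → ℝ) → (Fin n → ℝ) := fun z =>
    -DU z ((0:ℝ), u z.1 z.2) - (fun i => DP z ((0:ℝ), Pi.single i 1))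
      + η • ∑ j, DW j z ((0:ℝ), Pi.single j 1) with hRjdef
  set Fj : ℝ × (Fin n → ℝ) → ℝ := fun z => dotp (u z.1 z.2) (Rj z) with hFjdef
  -- smoothness of the joint derivative fields
  have hDUc : ContDiffOn ℝ (⊤:ℕ∞) DU ((Set.Icc (0:ℝ) T) ×ˢ (Set.univ : Set (Fin n → ℝ))) :=
    hu.fderivWithin hΩu top_succ_le
  have hDPc : ContDiffOn ℝ (⊤:ℕ∞) DP ((Set.Icc (0:ℝ) T) ×ˢ (Set.univ : Set (Fin n → ℝ))) :=
    hp.fderivWithin hΩu top_succ_le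
  have hWc : ∀ j, ContDiffOn ℝ (⊤:ℕ∞) (W j)
      ((Set.Icc (0:ℝ) T) ×ˢ (Set.univ : Set (Fin n → ℝ))) := fun j => by
    exact (ContinuousLinearMap.apply ℝ (Fin n → ℝ)
      ((0:ℝ), Pi.single j 1)).contDiff.comp_contDiffOn hDUc
  have hDWc : ∀ j, ContDiffOn ℝ (⊤:ℕ∞) (DW j)
      ((Set.Icc (0:ℝ) T) ×ˢ (Set.univ : Set (Fin n → ℝ))) := fun j =>
    (hWc j).fderivWithin hΩu top_succ_le
  -- joint continuity
  have hUcont : ContinuousOn (fun z : ℝ × (Fin n → ℝ) => u z.1 z.2)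
      ((Set.Icc (0:ℝ) T) ×ˢ (Set.univ : Set (Fin n → ℝ))) := hu.continuousOn
  have hRjcont : ContinuousOn Rj ((Set.Icc (0:ℝ) T) ×ˢ (Set.univ : Set (Fin n → ℝ))) := by
    have t1 : ContinuousOn (fun z : ℝ × (Fin n → ℝ) => DU z ((0:ℝ), u z.1 z.2))
        ((Set.Icc (0:ℝ) T) ×ˢ (Set.univ : Set (Fin n → ℝ))) :=
      (hDUc.continuousOn).clm_apply (continuousOn_const.prodMk hUcont)
    have t2 : ContinuousOn (fun z : ℝ × (Fin n → ℝ) =>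
        (fun i => DP z ((0:ℝ), Pi.single i 1)))
        ((Set.Icc (0:ℝ) T) ×ˢ (Set.univ : Set (Fin n → ℝ))) :=
      continuousOn_pi.mpr fun i => (hDPc.continuousOn).clm_apply continuousOn_const
    have t3 : ContinuousOn (fun z : ℝ × (Fin n → ℝ) =>
        ∑ j, DW j z ((0:ℝ), Pi.single j 1))
        ((Set.Icc (0:ℝ) T) ×ˢ (Set.univ : Set (Fin n → ℝ))) := by
      apply continuousOn_finset_sum
      intro j _
      exact ((hDWc j).continuousOn).clm_apply continuousOn_const
    exact ((t1.neg).sub t2).add (t3.const_smul η)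
  have hFjcont : ContinuousOn Fj ((Set.Icc (0:ℝ) T) ×ˢ (Set.univ : Set (Fin n → ℝ))) := by
    apply continuousOn_finset_sum
    intro i _
    exact ((continuous_apply i).comp_continuousOn hUcont).mul
      ((continuous_apply i).comp_continuousOn hRjcont)
  -- pointwise identification of Rj with the Navier-Stokes right-hand side
  have hRj_eq : ∀ t ∈ Set.Icc (0:ℝ) T, ∀ x, Rj (t, x)
      = -advDeriv (u t) (u t) x - gradf (p t) x + η • lap (u t) x := by
    intro t ht x
    have e1 : advDeriv (u t) (u t) x = DU (t, x) ((0:ℝ), u t x) := by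
      rw [advDeriv]
      exact slice_fderiv_apply hUdiff ht x (u t x)
    have e2 : gradf (p t) x = fun i => DP (t, x) ((0:ℝ), Pi.single i 1) :=
      funext fun i => slice_fderiv_apply hPdiff ht x _
    have e3 : lap (u t) x = ∑ j, DW j (t, x) ((0:ℝ), Pi.single j 1) := by
      refine Finset.sum_congr rfl fun j _ => ?_
      have hslice1 : (fun y => fderiv ℝ (u t) y (Pi.single j 1)) = fun y => W j (t, y) :=
        funext fun y => slice_fderiv_apply hUdiff ht y _
      rw [hslice1]
      exact slice_fderiv_apply ((hWc j).differentiableOn top_ne0) ht x _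
    rw [hRjdef, e1, e2, e3]
  -- the time derivative of u along the solution
  have hcurve : ∀ t ∈ Set.Icc (0:ℝ) T, ∀ x,
      HasDerivWithinAt (fun τ => u τ x) (Rj (t, x)) (Set.Icc (0:ℝ) T) t := by
    intro t ht x
    have h0 := tslice_hasDerivWithinAt hUdiff ht x
    have h1 : derivWithin (fun τ => u τ x) (Set.Icc (0:ℝ) T) t = DU (t, x) (1, 0) :=
      h0.derivWithin ((uniqueDiffOn_Icc hT) t ht)
    have h2 : DU (t, x) ((1:ℝ), (0 : Fin n → ℝ)) = Rj (t, x) := by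
      rw [← h1, hNSE t ht x, hRj_eq t ht x]
    exact h2 ▸ h0
  -- derivative of the pointwise energy density
  have henergy : ∀ t ∈ Set.Icc (0:ℝ) T, ∀ x,
      HasDerivWithinAt (fun τ => (1/2 : ℝ) * dotp (u τ x) (u τ x)) (Fj (t, x))
        (Set.Icc (0:ℝ) T) t := by
    intro t ht x
    have hc := hcurve t ht x
    have hci : ∀ i, HasDerivWithinAt (fun τ => u τ x i) (Rj (t, x) i)
        (Set.Icc (0:ℝ) T) t := fun i => (hasDerivWithinAt_pi.mp hc) i
    have hsq : HasDerivWithinAt (fun τ => ∑ i, u τ x i * u τ x i)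
        (∑ i, (Rj (t, x) i * u t x i + u t x i * Rj (t, x) i)) (Set.Icc (0:ℝ) T) t :=
      HasDerivWithinAt.fun_sum fun i _ => (hci i).mul (hci i)
    have h := hsq.const_mul (1/2 : ℝ)
    have hval : (1/2 : ℝ) * (∑ i, (Rj (t, x) i * u t x i + u t x i * Rj (t, x) i))
        = Fj (t, x) := by
      rw [hFjdef]
      show _ = dotp (u t x) (Rj (t, x))
      unfold dotp
      rw [Finset.mul_sum]
      exact Finset.sum_congr rfl fun i _ => by ring
    rw [hval] at h
    exact h
  -- integrability of the energy density
  have hInt : ∀ t ∈ Set.Icc (0:ℝ) T,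
      IntegrableOn (fun x => dotp (u t x) (u t x)) (cube n) := by
    intro t ht
    have hc : Continuous (fun x => dotp (u t x) (u t x)) := by
      apply continuous_finset_sum
      intro i _
      exact (((continuous_apply i).comp (hut t ht).continuous)).mul
        ((continuous_apply i).comp (hut t ht).continuous)
    exact hc.continuousOn.integrableOn_compact hK
  set g : ℝ → ℝ := fun τ => ∫ x in cube n, Fj (τ, x) with hgdef
  -- continuity of g
  have hgcont : ContinuousOn g (Set.Icc (0:ℝ) T) := by
    obtain ⟨C, hC⟩ := (isCompact_Icc.prod hK).exists_bound_of_continuousOn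
      (hFjcont.mono (fun z hz => ⟨hz.1, trivial⟩))
    apply continuousOn_of_dominated (bound := fun _ => C)
    · intro τ hτ
      exact ((hFjcont.comp ((continuous_const.prodMk continuous_id).continuousOn)
        (fun x _ => ⟨hτ, trivial⟩)).aestronglyMeasurable hKm)
    · intro τ hτ
      refine (ae_restrict_iff' hKm).mpr (Filter.Eventually.of_forall fun x hx => ?_)
      exact hC (τ, x) ⟨hτ, hx⟩
    · exact integrableOn_const hK.measure_lt_top.ne
    · refine Filter.Eventually.of_forall fun x => ?_
      exact hFjcont.comp ((continuous_id.prodMk continuous_const).continuousOn)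
        (fun τ hτ => ⟨hτ, trivial⟩)
  -- the value of g on [0, T]
  have hg_eq : ∀ t ∈ Set.Icc (0:ℝ) T, g t
      = -(η * ∫ x in cube n, ∑ i, dotp (fderiv ℝ (u t) x (Pi.single i 1))
            (fderiv ℝ (u t) x (Pi.single i 1))) := by
    intro t ht
    have h1 : g t = ∫ x in cube n,
        dotp (u t x) (-advDeriv (u t) (u t) x - gradf (p t) x + η • lap (u t) x) := by
      rw [hgdef]
      refine integral_congr_ae (Filter.Eventually.of_forall fun x => ?_)
      show Fj (t, x) = _
      rw [hFjdef]
      show dotp (u t x) (Rj (t, x)) = _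
      rw [hRj_eq t ht x]
    rw [h1]
    exact spatial_identity η (hut t ht) (hpt t ht) (hup t ht) (hpp t ht) (hdivu t ht)
  -- nonnegativity of the dissipation integrand
  have hDnn : ∀ t, (0:ℝ) ≤ ∫ x in cube n, ∑ i, dotp (fderiv ℝ (u t) x (Pi.single i 1))
      (fderiv ℝ (u t) x (Pi.single i 1)) := fun t =>
    setIntegral_nonneg hKm fun x _ => Finset.sum_nonneg fun i _ => dotp_nonneg _
  -- the fundamental identity
  have key : ∀ t₁ ∈ Set.Icc (0:ℝ) T, ∀ t₂ ∈ Set.Icc (0:ℝ) T, t₁ ≤ t₂ →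
      ((1/2 : ℝ) * ∫ x in cube n, dotp (u t₂ x) (u t₂ x))
        = ((1/2 : ℝ) * ∫ x in cube n, dotp (u t₁ x) (u t₁ x)) + ∫ τ in t₁..t₂, g τ := by
    intro t₁ h₁ t₂ h₂ h12
    have hsub : Set.Icc t₁ t₂ ⊆ Set.Icc (0:ℝ) T := Set.Icc_subset_Icc h₁.1 h₂.2
    -- pointwise FTC
    have hx : ∀ x : Fin n → ℝ, ∫ τ in t₁..t₂, Fj (τ, x)
        = (1/2 : ℝ) * dotp (u t₂ x) (u t₂ x) - (1/2 : ℝ) * dotp (u t₁ x) (u t₁ x) := by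
      intro x
      apply intervalIntegral.integral_eq_sub_of_hasDeriv_right_of_le h12
      · intro τ hτ
        exact ((henergy τ (hsub hτ) x).continuousWithinAt).mono hsub
      · intro τ hτ
        have hτS : τ ∈ Set.Icc (0:ℝ) T := hsub (Set.Ioo_subset_Icc_self hτ)
        have hnh : Set.Icc (0:ℝ) T ∈ nhds τ :=
          Icc_mem_nhds (lt_of_le_of_lt h₁.1 hτ.1) (lt_of_lt_of_le hτ.2 h₂.2)
        exact ((henergy τ hτS x).hasDerivAt hnh).hasDerivWithinAt
      · have hcF : ContinuousOn (fun τ => Fj (τ, x)) (Set.uIcc t₁ t₂) := by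
          rw [Set.uIcc_of_le h12]
          exact hFjcont.comp ((continuous_id.prodMk continuous_const).continuousOn)
            (fun τ hτ => ⟨hsub hτ, trivial⟩)
        exact hcF.intervalIntegrable
    -- Fubini
    have hswap : ∫ x in cube n, (∫ τ in Set.Ioc t₁ t₂, Fj (τ, x))
        = ∫ τ in Set.Ioc t₁ t₂, ∫ x in cube n, Fj (τ, x) := by
      have hprod : IntegrableOn (fun z : (Fin n → ℝ) × ℝ => Fj (z.2, z.1))
          ((cube n) ×ˢ Set.Ioc t₁ t₂) (volume.prod volume) := by
        apply IntegrableOn.mono_set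
          (t := (cube n) ×ˢ Set.Icc t₁ t₂)
        · apply ContinuousOn.integrableOn_compact (hK.prod isCompact_Icc)
          refine hFjcont.comp (continuous_swap.continuousOn) ?_
          intro z hz
          exact ⟨hsub hz.2, trivial⟩
        · exact Set.prod_mono_right Set.Ioc_subset_Icc_self
      have hint : Integrable (Function.uncurry fun x τ => Fj (τ, x))
          ((volume.restrict (cube n)).prod (volume.restrict (Set.Ioc t₁ t₂))) := by
        rw [Measure.prod_restrict]
        exact hprod
      exact MeasureTheory.integral_integral_swap hint
    have hdiff : ∫ τ in t₁..t₂, g τ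
        = ((1/2 : ℝ) * ∫ x in cube n, dotp (u t₂ x) (u t₂ x))
          - ((1/2 : ℝ) * ∫ x in cube n, dotp (u t₁ x) (u t₁ x)) := by
      rw [intervalIntegral.integral_of_le h12]
      have : ∫ τ in Set.Ioc t₁ t₂, g τ = ∫ τ in Set.Ioc t₁ t₂, ∫ x in cube n, Fj (τ, x) := rfl
      rw [this, ← hswap]
      have h2 : ∫ x in cube n, (∫ τ in Set.Ioc t₁ t₂, Fj (τ, x))
          = ∫ x in cube n, ((1/2 : ℝ) * dotp (u t₂ x) (u t₂ x)
              - (1/2 : ℝ) * dotp (u t₁ x) (u t₁ x)) := by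
        refine integral_congr_ae (Filter.Eventually.of_forall fun x => ?_)
        show (∫ τ in Set.Ioc t₁ t₂, Fj (τ, x)) = _
        rw [← intervalIntegral.integral_of_le h12]
        exact hx x
      rw [h2, integral_sub ((hInt t₂ h₂).const_mul _) ((hInt t₁ h₁).const_mul _),
        integral_const_mul, integral_const_mul]
    linarith [hdiff]
  constructor
  · intro t ht
    haveI : Fact (t ∈ Set.Icc (0:ℝ) T) := ⟨ht⟩
    have hgint : IntervalIntegrable g volume 0 t := by
      apply ContinuousOn.intervalIntegrable
      rw [Set.uIcc_of_le ht.1]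
      exact hgcont.mono (Set.Icc_subset_Icc le_rfl ht.2)
    have hmeas : StronglyMeasurableAtFilter g (nhdsWithin t (Set.Icc (0:ℝ) T)) volume :=
      ⟨Set.Icc 0 T, self_mem_nhdsWithin, hgcont.aestronglyMeasurable measurableSet_Icc⟩
    have hftc : HasDerivWithinAt (fun τ => ∫ s in (0:ℝ)..τ, g s) (g t)
        (Set.Icc (0:ℝ) T) t :=
      intervalIntegral.integral_hasDerivWithinAt_right hgint hmeas (hgcont t ht)
    have hfun := hftc.const_add ((1/2 : ℝ) * ∫ x in cube n, dotp (u 0 x) (u 0 x))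
    have hcongr : HasDerivWithinAt
        (fun τ => (1/2 : ℝ) * ∫ x in cube n, dotp (u τ x) (u τ x)) (g t)
        (Set.Icc (0:ℝ) T) t := by
      apply hfun.congr
      · intro τ hτ
        exact key 0 h0S τ hτ hτ.1
      · exact key 0 h0S t ht ht.1
    constructor
    · rw [hg_eq t ht] at hcongr
      exact hcongr
    · exact neg_nonpos.mpr (mul_nonneg hη.le (hDnn t))
  · intro t₁ h₁ t₂ h₂ h12
    have hk := key t₁ h₁ t₂ h₂ h12
    have hneg : ∫ τ in t₁..t₂, g τ ≤ 0 := by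
      have h0 : (0:ℝ) ≤ ∫ τ in t₁..t₂, -g τ := by
        apply intervalIntegral.integral_nonneg h12
        intro τ hτ
        have hτS : τ ∈ Set.Icc (0:ℝ) T := Set.Icc_subset_Icc h₁.1 h₂.2 hτ
        rw [hg_eq τ hτS, neg_neg]
        exact mul_nonneg hη.le (hDnn τ)
      rw [intervalIntegral.integral_neg] at h0
      linarith
    linarith [hk, hneg]
end
end

section
/- (Deterministic transport identity behind the Kelvin Circulation Theorem, Proposition 4 of the paper.) Let v : [0,T] × ℝⁿ → ℝⁿ and ξ : [0,T] × ℝⁿ → ℝⁿ be smooth, let g : [0,T] × ℝⁿ → ℝⁿ be smooth with ∂_t g(t,x) = v(t, g(t,x)) for all (t,x), and let c : [0,1] → ℝⁿ be a smooth curve. Then for all t ∈ [0,T]: d/dt ∫₀¹ ⟨ξ(t, g(t, c(s))), ∂_s(g(t, c(s)))⟩ ds = ∫₀¹ ⟨(∂_t ξ + ∇_{v}ξ + v'⊗ξ)(t, g(t, c(s))), ∂_s(g(t, c(s)))⟩ ds. -/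
noncomputable section
open MeasureTheory

lemma dotp_add_left {n : ℕ} (a b w : Fin n → ℝ) : dotp (a + b) w = dotp a w + dotp b w := by
  simp [dotp, add_mul, Finset.sum_add_distrib]

lemma dotp_clm {n : ℕ} (A : (Fin n → ℝ) →L[ℝ] (Fin n → ℝ)) (u w : Fin n → ℝ) :
    dotp u (A w) = ∑ i, (∑ j, A (Pi.single i 1) j * u j) * w i := by
  have hw : w = ∑ i, w i • (Pi.single i 1 : Fin n → ℝ) := by
    funext j
    simp [Pi.single_apply, Finset.sum_apply, mul_comm]
  nth_rewrite 1 [hw]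
  simp only [map_sum, ContinuousLinearMap.map_smul]
  unfold dotp
  simp only [Finset.sum_apply, Pi.smul_apply, smul_eq_mul, Finset.mul_sum]
  rw [Finset.sum_comm]
  congr 1; funext i
  rw [Finset.sum_mul]
  congr 1; funext j
  ring

lemma ContinuousOn.dotp' {n : ℕ} {α : Type*} [TopologicalSpace α] {f g : α → Fin n → ℝ}
    {s : Set α} (hf : ContinuousOn f s) (hg : ContinuousOn g s) :
    ContinuousOn (fun x => dotp (f x) (g x)) s := by
  unfold dotp
  exact continuousOn_finset_sum _ fun i _ =>
    ((continuous_apply i).comp_continuousOn hf).mul ((continuous_apply i).comp_continuousOn hg)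

set_option maxHeartbeats 2000000 in
/-- deterministic transport identity behind the Kelvin
Circulation Theorem: with `∂_t g(t,x) = v(t,g(t,x))`,
`d/dt ∫₀¹ ⟨ξ(t,g(t,c(s))), ∂_s g(t,c(s))⟩ ds
  = ∫₀¹ ⟨(∂_tξ + ∇_vξ + v'⊗ξ)(t,g(t,c(s))), ∂_s g(t,c(s))⟩ ds`. -/
theorem stmt17 {n : ℕ} (T : ℝ) (hT : 0 < T)
    (v ξ g : ℝ → (Fin n → ℝ) → (Fin n → ℝ)) (c : ℝ → Fin n → ℝ)
    (hv : ContDiffOn ℝ (⊤:ℕ∞) (fun z : ℝ × (Fin n → ℝ) => v z.1 z.2)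
      (Set.Icc 0 T ×ˢ Set.univ))
    (hξ : ContDiffOn ℝ (⊤:ℕ∞) (fun z : ℝ × (Fin n → ℝ) => ξ z.1 z.2)
      (Set.Icc 0 T ×ˢ Set.univ))
    (hg : ContDiffOn ℝ (⊤:ℕ∞) (fun z : ℝ × (Fin n → ℝ) => g z.1 z.2)
      (Set.Icc 0 T ×ˢ Set.univ))
    (hc : ContDiffOn ℝ (⊤:ℕ∞) c (Set.Icc 0 1))
    (hflow : ∀ t ∈ Set.Icc (0:ℝ) T, ∀ x,
      derivWithin (fun τ => g τ x) (Set.Icc 0 T) t = v t (g t x)) :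
    ∀ t ∈ Set.Icc (0:ℝ) T,
      HasDerivWithinAt
        (fun τ => ∫ s in (0:ℝ)..1,
          dotp (ξ τ (g τ (c s))) (derivWithin (fun σ => g τ (c σ)) (Set.Icc 0 1) s))
        (∫ s in (0:ℝ)..1,
          dotp (derivWithin (fun τ => ξ τ (g t (c s))) (Set.Icc 0 T) t
                  + advDeriv (v t) (ξ t) (g t (c s))
                  + lineStretch (v t) (ξ t) (g t (c s)))
               (derivWithin (fun σ => g t (c σ)) (Set.Icc 0 1) s))
        (Set.Icc 0 T) t := by
  intro t ht
  have h1top : (1 : WithTop ℕ∞) ≤ ((⊤:ℕ∞) : WithTop ℕ∞) := by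
    exact WithTop.coe_le_coe.mpr le_top
  have h2top : (2 : WithTop ℕ∞) ≤ ((⊤:ℕ∞) : WithTop ℕ∞) := by
    exact WithTop.coe_le_coe.mpr le_top
  have htop1 : ((⊤:ℕ∞) : WithTop ℕ∞) + 1 ≤ ((⊤:ℕ∞) : WithTop ℕ∞) := by norm_num
  have hIu : UniqueDiffOn ℝ (Set.Icc (0:ℝ) T) := uniqueDiffOn_Icc hT
  have hJu : UniqueDiffOn ℝ (Set.Icc (0:ℝ) 1) := uniqueDiffOn_Icc one_pos
  set S : Set (ℝ × ℝ) := (Set.Icc (0:ℝ) T) ×ˢ (Set.Icc (0:ℝ) 1) with hS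
  set U : Set (ℝ × (Fin n → ℝ)) := (Set.Icc (0:ℝ) T) ×ˢ (Set.univ : Set (Fin n → ℝ)) with hU
  have hSu : UniqueDiffOn ℝ S := hIu.prod hJu
  have hUu : UniqueDiffOn ℝ U := hIu.prod uniqueDiffOn_univ
  set H : ℝ × ℝ → (Fin n → ℝ) := fun p => g p.1 (c p.2) with hHdef
  have hH : ContDiffOn ℝ (⊤:ℕ∞) H S := by
    apply hg.comp (f := fun p : ℝ × ℝ => (p.1, c p.2))
    · exact (contDiff_fst.contDiffOn).prodMk (hc.comp contDiff_snd.contDiffOn (fun p hp => hp.2))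
    · exact fun p hp => ⟨hp.1, trivial⟩
  set Hd : ℝ × ℝ → (ℝ × ℝ →L[ℝ] (Fin n → ℝ)) := fderivWithin ℝ H S with hHddef
  have hHds : ContDiffOn ℝ (⊤:ℕ∞) Hd S := hH.fderivWithin hSu htop1
  set Hdd : ℝ × ℝ → (ℝ × ℝ →L[ℝ] (ℝ × ℝ →L[ℝ] (Fin n → ℝ))) := fderivWithin ℝ Hd S with hHdddef
  have hHdds : ContDiffOn ℝ (⊤:ℕ∞) Hdd S := hHds.fderivWithin hSu htop1
  set Ξ : ℝ × (Fin n → ℝ) → (Fin n → ℝ) := fun z => ξ z.1 z.2 with hΞdef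
  set Ξd : ℝ × (Fin n → ℝ) → (ℝ × (Fin n → ℝ) →L[ℝ] (Fin n → ℝ)) := fderivWithin ℝ Ξ U with hΞddef
  have hΞds : ContDiffOn ℝ (⊤:ℕ∞) Ξd U := hξ.fderivWithin hUu htop1
  set V : ℝ × (Fin n → ℝ) → (Fin n → ℝ) := fun z => v z.1 z.2 with hVdef
  set Vd : ℝ × (Fin n → ℝ) → (ℝ × (Fin n → ℝ) →L[ℝ] (Fin n → ℝ)) := fderivWithin ℝ V U with hVddef
  have hVds : ContDiffOn ℝ (⊤:ℕ∞) Vd U := hv.fderivWithin hUu htop1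
  -- slice derivatives of H
  have hB : ∀ p ∈ S, HasDerivWithinAt (fun σ => H (p.1, σ)) (Hd p (0,1)) (Set.Icc (0:ℝ) 1) p.2 := by
    rintro ⟨τ, s⟩ hp
    have hcurve : HasDerivWithinAt (fun σ : ℝ => (τ, σ)) ((0:ℝ),(1:ℝ)) (Set.Icc (0:ℝ) 1) s :=
      (hasDerivWithinAt_const _ _ τ).prodMk (hasDerivWithinAt_id _ _)
    have hdH : DifferentiableWithinAt ℝ H S (τ, s) := (hH.differentiableOn (by simp)) _ hp
    have := hdH.hasFDerivWithinAt.comp_hasDerivWithinAt s hcurve (fun σ hσ => ⟨hp.1, hσ⟩)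
    exact this
  have hA : ∀ p ∈ S, HasDerivWithinAt (fun τ => H (τ, p.2)) (Hd p (1,0)) (Set.Icc (0:ℝ) T) p.1 := by
    rintro ⟨τ, s⟩ hp
    have hcurve : HasDerivWithinAt (fun τ' : ℝ => (τ', s)) ((1:ℝ),(0:ℝ)) (Set.Icc (0:ℝ) T) τ :=
      (hasDerivWithinAt_id _ _).prodMk (hasDerivWithinAt_const _ _ s)
    have hdH : DifferentiableWithinAt ℝ H S (τ, s) := (hH.differentiableOn (by simp)) _ hp
    exact hdH.hasFDerivWithinAt.comp_hasDerivWithinAt τ hcurve (fun τ' hτ' => (⟨hτ', hp.2⟩ : (τ', s) ∈ S))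
  have hflow' : ∀ p ∈ S, Hd p (1,0) = v p.1 (H p) := by
    rintro ⟨τ, s⟩ hp
    have h1 := (hA _ hp).derivWithin (hIu _ hp.1)
    rw [← h1, hflow τ hp.1 (c s)]
  -- slices of xi and v
  have hΞt : ∀ z ∈ U, HasDerivWithinAt (fun τ => ξ τ z.2) (Ξd z (1,0)) (Set.Icc (0:ℝ) T) z.1 := by
    rintro ⟨τ, x⟩ hz
    have hcurve : HasDerivWithinAt (fun τ' : ℝ => (τ', x)) ((1:ℝ),(0:Fin n → ℝ)) (Set.Icc (0:ℝ) T) τ :=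
      (hasDerivWithinAt_id _ _).prodMk (hasDerivWithinAt_const _ _ x)
    have hdΞ : DifferentiableWithinAt ℝ Ξ U (τ, x) := (hξ.differentiableOn (by simp)) _ hz
    exact hdΞ.hasFDerivWithinAt.comp_hasDerivWithinAt τ hcurve (fun τ' hτ' => (⟨hτ', trivial⟩ : (τ', x) ∈ U))
  have hΞx : ∀ z ∈ U, HasFDerivAt (ξ z.1)
      ((Ξd z).comp (ContinuousLinearMap.inr ℝ ℝ (Fin n → ℝ))) z.2 := by
    rintro ⟨τ, x⟩ hz
    have hmk : HasFDerivAt (fun x' : Fin n → ℝ => (τ, x'))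
        (ContinuousLinearMap.inr ℝ ℝ (Fin n → ℝ)) x := hasFDerivAt_prodMk_right τ x
    have hdΞ : DifferentiableWithinAt ℝ Ξ U (τ, x) := (hξ.differentiableOn (by simp)) _ hz
    have := hdΞ.hasFDerivWithinAt.comp x (hmk.hasFDerivWithinAt (s := Set.univ))
      (fun x' _ => ⟨hz.1, trivial⟩)
    rw [hasFDerivWithinAt_univ] at this
    exact this
  have hVx : ∀ z ∈ U, HasFDerivAt (v z.1)
      ((Vd z).comp (ContinuousLinearMap.inr ℝ ℝ (Fin n → ℝ))) z.2 := by
    rintro ⟨τ, x⟩ hz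
    have hmk : HasFDerivAt (fun x' : Fin n → ℝ => (τ, x'))
        (ContinuousLinearMap.inr ℝ ℝ (Fin n → ℝ)) x := hasFDerivAt_prodMk_right τ x
    have hdV : DifferentiableWithinAt ℝ V U (τ, x) := (hv.differentiableOn (by simp)) _ hz
    have := hdV.hasFDerivWithinAt.comp x (hmk.hasFDerivWithinAt (s := Set.univ))
      (fun x' _ => ⟨hz.1, trivial⟩)
    rw [hasFDerivWithinAt_univ] at this
    exact this
  have hfdξ : ∀ z ∈ U, ∀ w, fderiv ℝ (ξ z.1) z.2 w = Ξd z (0, w) := by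
    intro z hz w
    rw [(hΞx z hz).fderiv]
    rfl
  have hfdv : ∀ z ∈ U, ∀ w, fderiv ℝ (v z.1) z.2 w = Vd z (0, w) := by
    intro z hz w
    rw [(hVx z hz).fderiv]
    rfl
  -- symmetry of second derivative of H
  have hclos : closure (interior S) = S := by
    rw [hS, interior_prod_eq, interior_Icc, interior_Icc, closure_prod_eq,
      closure_Ioo hT.ne, closure_Ioo one_ne_zero.symm]
  have hsymm : ∀ p ∈ S, Hdd p (1,0) (0,1) = Hdd p (0,1) (1,0) := by
    intro p hp
    have := (hH.contDiffWithinAt hp).isSymmSndFDerivWithinAt (by simpa using h2top) hSu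
      (hclos.symm ▸ hp) hp
    exact this (1,0) (0,1)
  -- τ-derivative of the s-partial of H
  have hK : ∀ p ∈ S, HasDerivWithinAt (fun τ => Hd (τ, p.2) ((0:ℝ),(1:ℝ)))
      (Hdd p (1,0) (0,1)) (Set.Icc (0:ℝ) T) p.1 := by
    rintro ⟨τ, s⟩ hp
    have hdHd : DifferentiableWithinAt ℝ Hd S (τ, s) := (hHds.differentiableOn (by simp)) _ hp
    have happ : HasFDerivWithinAt (fun q => Hd q ((0:ℝ),(1:ℝ)))
        ((ContinuousLinearMap.apply ℝ (Fin n → ℝ) ((0:ℝ),(1:ℝ))).comp (Hdd (τ,s))) S (τ,s) :=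
      (ContinuousLinearMap.apply ℝ (Fin n → ℝ) ((0:ℝ),(1:ℝ))).hasFDerivAt.comp_hasFDerivWithinAt
        (τ,s) hdHd.hasFDerivWithinAt
    have hcurve : HasDerivWithinAt (fun τ' : ℝ => (τ', s)) ((1:ℝ),(0:ℝ)) (Set.Icc (0:ℝ) T) τ :=
      (hasDerivWithinAt_id _ _).prodMk (hasDerivWithinAt_const _ _ s)
    exact happ.comp_hasDerivWithinAt τ hcurve (fun τ' hτ' => (⟨hτ', hp.2⟩ : (τ', s) ∈ S))
  have hsK : ∀ p ∈ S, HasDerivWithinAt (fun σ => Hd (p.1, σ) ((1:ℝ),(0:ℝ)))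
      (Hdd p (0,1) (1,0)) (Set.Icc (0:ℝ) 1) p.2 := by
    rintro ⟨τ, s⟩ hp
    have hdHd : DifferentiableWithinAt ℝ Hd S (τ, s) := (hHds.differentiableOn (by simp)) _ hp
    have happ : HasFDerivWithinAt (fun q => Hd q ((1:ℝ),(0:ℝ)))
        ((ContinuousLinearMap.apply ℝ (Fin n → ℝ) ((1:ℝ),(0:ℝ))).comp (Hdd (τ,s))) S (τ,s) :=
      (ContinuousLinearMap.apply ℝ (Fin n → ℝ) ((1:ℝ),(0:ℝ))).hasFDerivAt.comp_hasFDerivWithinAt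
        (τ,s) hdHd.hasFDerivWithinAt
    have hcurve : HasDerivWithinAt (fun σ : ℝ => (τ, σ)) ((0:ℝ),(1:ℝ)) (Set.Icc (0:ℝ) 1) s :=
      (hasDerivWithinAt_const _ _ τ).prodMk (hasDerivWithinAt_id _ _)
    exact happ.comp_hasDerivWithinAt s hcurve (fun σ hσ => ⟨hp.1, hσ⟩)
  have hmixval : ∀ p ∈ S, Hdd p (0,1) (1,0) = fderiv ℝ (v p.1) (H p) (Hd p (0,1)) := by
    rintro ⟨τ, s⟩ hp
    have hz : (τ, H (τ,s)) ∈ U := ⟨hp.1, trivial⟩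
    have hdv : DifferentiableAt ℝ (v τ) (H (τ,s)) := (hVx _ hz).differentiableAt
    have hcomp : HasDerivWithinAt (fun σ => v τ (H (τ, σ)))
        (fderiv ℝ (v τ) (H (τ,s)) (Hd (τ,s) (0,1))) (Set.Icc (0:ℝ) 1) s :=
      hdv.hasFDerivAt.comp_hasDerivWithinAt s (hB (τ,s) hp)
    have hcongr : HasDerivWithinAt (fun σ => Hd (τ, σ) ((1:ℝ),(0:ℝ)))
        (fderiv ℝ (v τ) (H (τ,s)) (Hd (τ,s) (0,1))) (Set.Icc (0:ℝ) 1) s := by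
      apply hcomp.congr
      · intro σ hσ
        exact hflow' (τ, σ) ⟨hp.1, hσ⟩
      · exact hflow' (τ, s) hp
    rw [← (hsK (τ,s) hp).derivWithin (hJu _ hp.2), hcongr.derivWithin (hJu _ hp.2)]
  -- derivative of the first factor
  have ha : ∀ p ∈ S, HasDerivWithinAt (fun τ => ξ τ (H (τ, p.2)))
      (Ξd (p.1, H p) (1, v p.1 (H p))) (Set.Icc (0:ℝ) T) p.1 := by
    rintro ⟨τ, s⟩ hp
    have hz : (τ, H (τ,s)) ∈ U := ⟨hp.1, trivial⟩
    have hdΞ : DifferentiableWithinAt ℝ Ξ U (τ, H (τ,s)) := (hξ.differentiableOn (by simp)) _ hz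
    have hcurve : HasDerivWithinAt (fun τ' => (τ', H (τ', s)))
        ((1:ℝ), v τ (H (τ,s))) (Set.Icc (0:ℝ) T) τ := by
      have := (hasDerivWithinAt_id τ (Set.Icc (0:ℝ) T)).prodMk (hA (τ,s) hp)
      rwa [hflow' (τ,s) hp] at this
    exact hdΞ.hasFDerivWithinAt.comp_hasDerivWithinAt τ hcurve (fun τ' hτ' => (⟨hτ', trivial⟩ : (τ', H (τ', s)) ∈ U))
  -- the integrand and its time derivative
  set Fn : ℝ × ℝ → ℝ := fun p => dotp (ξ p.1 (H p)) (Hd p ((0:ℝ),(1:ℝ))) with hFndef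
  set R : ℝ × ℝ → ℝ := fun p => dotp (Ξd (p.1, H p) (1, v p.1 (H p))) (Hd p ((0:ℝ),(1:ℝ)))
      + dotp (ξ p.1 (H p)) (Vd (p.1, H p) (0, Hd p ((0:ℝ),(1:ℝ)))) with hRdef
  have hFderiv : ∀ p ∈ S, HasDerivWithinAt (fun τ => Fn (τ, p.2)) (R p) (Set.Icc (0:ℝ) T) p.1 := by
    rintro ⟨τ, s⟩ hp
    have hz : (τ, H (τ,s)) ∈ U := ⟨hp.1, trivial⟩
    have hb' : HasDerivWithinAt (fun τ' => Hd (τ', s) ((0:ℝ),(1:ℝ)))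
        (Vd (τ, H (τ,s)) (0, Hd (τ,s) (0,1))) (Set.Icc (0:ℝ) T) τ := by
      have h1 := hK (τ,s) hp
      rw [hsymm (τ,s) hp, hmixval (τ,s) hp, hfdv _ hz] at h1
      exact h1
    have ha' := ha (τ,s) hp
    have hsum : HasDerivWithinAt (fun τ' => ∑ i, (ξ τ' (H (τ', s)) i) * (Hd (τ', s) ((0:ℝ),(1:ℝ)) i))
        (∑ i, ((Ξd (τ, H (τ,s)) (1, v τ (H (τ,s))) i) * (Hd (τ,s) ((0:ℝ),(1:ℝ)) i)
          + (ξ τ (H (τ,s)) i) * (Vd (τ, H (τ,s)) (0, Hd (τ,s) (0,1)) i)))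
        (Set.Icc (0:ℝ) T) τ := by
      apply HasDerivWithinAt.fun_sum
      intro i _
      have hai : HasDerivWithinAt (fun τ' => ξ τ' (H (τ', s)) i)
          (Ξd (τ, H (τ,s)) (1, v τ (H (τ,s))) i) (Set.Icc (0:ℝ) T) τ :=
        (ContinuousLinearMap.proj (R := ℝ) (φ := fun _ : Fin n => ℝ) i).hasFDerivAt.comp_hasDerivWithinAt τ ha'
      have hbi : HasDerivWithinAt (fun τ' => Hd (τ', s) ((0:ℝ),(1:ℝ)) i)
          (Vd (τ, H (τ,s)) (0, Hd (τ,s) (0,1)) i) (Set.Icc (0:ℝ) T) τ :=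
        (ContinuousLinearMap.proj (R := ℝ) (φ := fun _ : Fin n => ℝ) i).hasFDerivAt.comp_hasDerivWithinAt τ hb'
      exact hai.mul hbi
    have hval : R (τ,s) = ∑ i, ((Ξd (τ, H (τ,s)) (1, v τ (H (τ,s))) i) * (Hd (τ,s) ((0:ℝ),(1:ℝ)) i)
          + (ξ τ (H (τ,s)) i) * (Vd (τ, H (τ,s)) (0, Hd (τ,s) (0,1)) i)) := by
      rw [hRdef]
      simp only [dotp, Finset.sum_add_distrib]
    rw [hval]
    exact hsum
  -- identification of R with the statement integrand
  have hRstmt : ∀ p ∈ S,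
      dotp (derivWithin (fun τ' => ξ τ' (g p.1 (c p.2))) (Set.Icc (0:ℝ) T) p.1
              + advDeriv (v p.1) (ξ p.1) (g p.1 (c p.2))
              + lineStretch (v p.1) (ξ p.1) (g p.1 (c p.2)))
           (Hd p ((0:ℝ),(1:ℝ))) = R p := by
    rintro ⟨τ, s⟩ hp
    dsimp only
    have hz : (τ, H (τ,s)) ∈ U := ⟨hp.1, trivial⟩
    have hd1 : derivWithin (fun τ' => ξ τ' (g τ (c s))) (Set.Icc (0:ℝ) T) τ
        = Ξd (τ, H (τ,s)) (1,0) := (hΞt (τ, H (τ,s)) hz).derivWithin (hIu _ hp.1)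
    have hd2 : advDeriv (v τ) (ξ τ) (g τ (c s)) = Ξd (τ, H (τ,s)) (0, v τ (H (τ,s))) := by
      simp only [advDeriv]
      exact hfdξ _ hz _
    have hd3 : dotp (lineStretch (v τ) (ξ τ) (g τ (c s))) (Hd (τ,s) ((0:ℝ),(1:ℝ)))
        = dotp (ξ τ (H (τ,s))) (Vd (τ, H (τ,s)) (0, Hd (τ,s) ((0:ℝ),(1:ℝ)))) := by
      rw [← hfdv _ hz (Hd (τ,s) ((0:ℝ),(1:ℝ))),
        dotp_clm (fderiv ℝ (v τ) (H (τ,s))) (ξ τ (H (τ,s))) (Hd (τ,s) ((0:ℝ),(1:ℝ)))]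
      rfl
    have hsum : Ξd (τ, H (τ,s)) ((1:ℝ),(0:Fin n → ℝ)) + Ξd (τ, H (τ,s)) ((0:ℝ), v τ (H (τ,s)))
        = Ξd (τ, H (τ,s)) (1, v τ (H (τ,s))) := by
      rw [← map_add]
      norm_num
    show dotp _ _ = dotp (Ξd (τ, H (τ,s)) (1, v τ (H (τ,s)))) (Hd (τ,s) ((0:ℝ),(1:ℝ)))
      + dotp (ξ τ (H (τ,s))) (Vd (τ, H (τ,s)) (0, Hd (τ,s) ((0:ℝ),(1:ℝ))))
    rw [dotp_add_left, dotp_add_left, hd1, hd2, hd3, ← hsum, dotp_add_left]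
  -- continuity facts
  have hzmapc : ContinuousOn (fun p : ℝ × ℝ => (p.1, H p)) S :=
    (continuous_fst.continuousOn).prodMk hH.continuousOn
  have hzmaps : Set.MapsTo (fun p : ℝ × ℝ => (p.1, H p)) S U := fun p hp => ⟨hp.1, trivial⟩
  have hHdc : ContinuousOn (fun p => Hd p ((0:ℝ),(1:ℝ))) S :=
    (hHds.continuousOn).clm_apply continuousOn_const
  have hΞdzc : ContinuousOn (fun p : ℝ × ℝ => Ξd (p.1, H p) (1, v p.1 (H p))) S :=
    ((hΞds.continuousOn).comp hzmapc hzmaps).clm_apply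
      (continuousOn_const.prodMk ((hv.continuousOn).comp hzmapc hzmaps))
  have hΞzc : ContinuousOn (fun p : ℝ × ℝ => ξ p.1 (H p)) S :=
    (hξ.continuousOn).comp hzmapc hzmaps
  have hVdzc : ContinuousOn (fun p : ℝ × ℝ => Vd (p.1, H p) (0, Hd p ((0:ℝ),(1:ℝ)))) S :=
    ((hVds.continuousOn).comp hzmapc hzmaps).clm_apply (continuousOn_const.prodMk hHdc)
  have hRc : ContinuousOn R S := (hΞdzc.dotp' hHdc).add (hΞzc.dotp' hVdzc)
  have hFc : ContinuousOn Fn S := hΞzc.dotp' hHdc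
  -- now the integral machinery
  have hT' : (0:ℝ) ∈ Set.Icc (0:ℝ) T := ⟨le_rfl, hT.le⟩
  have hIoc01 : Set.uIoc (0:ℝ) 1 = Set.Ioc 0 1 := Set.uIoc_of_le zero_le_one
  have hRsc : ∀ u ∈ Set.Icc (0:ℝ) T, ContinuousOn (fun s => R (u, s)) (Set.Icc (0:ℝ) 1) :=
    fun u hu => hRc.comp ((continuous_const.prodMk continuous_id).continuousOn)
      (fun s hs => ⟨hu, hs⟩)
  have hRuc : ∀ s ∈ Set.Icc (0:ℝ) 1, ContinuousOn (fun u => R (u, s)) (Set.Icc (0:ℝ) T) :=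
    fun s hs => hRc.comp ((continuous_id.prodMk continuous_const).continuousOn)
      (fun u hu => ⟨hu, hs⟩)
  have hFuc : ∀ s ∈ Set.Icc (0:ℝ) 1, ContinuousOn (fun u => Fn (u, s)) (Set.Icc (0:ℝ) T) :=
    fun s hs => hFc.comp ((continuous_id.prodMk continuous_const).continuousOn)
      (fun u hu => ⟨hu, hs⟩)
  have hFsc : ∀ u ∈ Set.Icc (0:ℝ) T, ContinuousOn (fun s => Fn (u, s)) (Set.Icc (0:ℝ) 1) :=
    fun u hu => hFc.comp ((continuous_const.prodMk continuous_id).continuousOn)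
      (fun s hs => ⟨hu, hs⟩)
  have hFTC2 : ∀ t' ∈ Set.Icc (0:ℝ) T, ∀ s ∈ Set.Icc (0:ℝ) 1,
      ∫ u in (0:ℝ)..t', R (u, s) = Fn (t', s) - Fn (0, s) := by
    intro t' ht' s hs
    apply intervalIntegral.integral_eq_sub_of_hasDeriv_right_of_le ht'.1
    · exact (hFuc s hs).mono (Set.Icc_subset_Icc le_rfl ht'.2)
    · intro x hx
      have hxI : x ∈ Set.Icc (0:ℝ) T := ⟨hx.1.le, (hx.2.trans_le ht'.2).le⟩
      exact ((hFderiv (x, s) ⟨hxI, hs⟩).hasDerivAt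
        (Icc_mem_nhds hx.1 (hx.2.trans_le ht'.2))).hasDerivWithinAt
    · exact ((hRuc s hs).mono (Set.Icc_subset_Icc le_rfl ht'.2)).intervalIntegrable_of_Icc ht'.1
  set Ψ : ℝ → ℝ := fun u => ∫ s in (0:ℝ)..1, R (u, s) with hΨdef
  obtain ⟨C, hC⟩ := (isCompact_Icc.prod isCompact_Icc :
    IsCompact S).exists_bound_of_continuousOn hRc
  have hΨc : ContinuousOn Ψ (Set.Icc (0:ℝ) T) := by
    intro u hu
    apply intervalIntegral.continuousWithinAt_of_dominated_interval (bound := fun _ => C)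
    · filter_upwards [self_mem_nhdsWithin] with x hx
      rw [hIoc01]
      exact ((hRsc x hx).mono Set.Ioc_subset_Icc_self).aestronglyMeasurable measurableSet_Ioc
    · filter_upwards [self_mem_nhdsWithin] with x hx
      apply Filter.Eventually.of_forall
      intro s hs
      rw [hIoc01] at hs
      exact hC (x, s) ⟨hx, Set.Ioc_subset_Icc_self hs⟩
    · exact intervalIntegrable_const
    · apply Filter.Eventually.of_forall
      intro s hs
      rw [hIoc01] at hs
      exact (hRc.comp ((continuous_id.prodMk continuous_const).continuousOn)
        (fun x hx => ⟨hx, Set.Ioc_subset_Icc_self hs⟩)) u hu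
  have hFint : ∀ t' ∈ Set.Icc (0:ℝ) T, IntervalIntegrable (fun s => Fn (t', s)) volume 0 1 :=
    fun t' ht' => (hFsc t' ht').intervalIntegrable_of_Icc zero_le_one
  have hkey : ∀ t' ∈ Set.Icc (0:ℝ) T,
      ∫ s in (0:ℝ)..1, Fn (t', s) = (∫ s in (0:ℝ)..1, Fn (0, s)) + ∫ u in (0:ℝ)..t', Ψ u := by
    intro t' ht'
    have h1 : (∫ s in (0:ℝ)..1, Fn (t', s)) - ∫ s in (0:ℝ)..1, Fn (0, s)
        = ∫ s in (0:ℝ)..1, (Fn (t', s) - Fn (0, s)) :=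
      (intervalIntegral.integral_sub (hFint t' ht') (hFint 0 hT')).symm
    have h2 : (∫ s in (0:ℝ)..1, (Fn (t', s) - Fn (0, s)))
        = ∫ s in (0:ℝ)..1, ∫ u in (0:ℝ)..t', R (u, s) := by
      apply intervalIntegral.integral_congr
      intro s hs
      rw [Set.uIcc_of_le zero_le_one] at hs
      exact (hFTC2 t' ht' s hs).symm
    have h3 : (∫ s in (0:ℝ)..1, ∫ u in (0:ℝ)..t', R (u, s)) = ∫ u in (0:ℝ)..t', Ψ u := by
      rw [hΨdef]
      simp only [intervalIntegral.integral_of_le ht'.1,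
        intervalIntegral.integral_of_le (zero_le_one' ℝ)]
      apply MeasureTheory.integral_integral_swap
      rw [Measure.prod_restrict]
      apply IntegrableOn.mono_set
        (t := (Set.Icc (0:ℝ) 1) ×ˢ (Set.Icc (0:ℝ) t'))
      · apply ContinuousOn.integrableOn_compact (isCompact_Icc.prod isCompact_Icc)
        exact hRc.comp (continuous_swap.continuousOn)
          (fun q hq => ⟨⟨hq.2.1, hq.2.2.trans ht'.2⟩, hq.1⟩)
      · exact Set.prod_mono Set.Ioc_subset_Icc_self Set.Ioc_subset_Icc_self
    linarith
  haveI : Fact (t ∈ Set.Icc (0:ℝ) T) := ⟨ht⟩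
  have hΨint : IntervalIntegrable Ψ volume 0 t :=
    (hΨc.mono (Set.Icc_subset_Icc le_rfl ht.2)).intervalIntegrable_of_Icc ht.1
  have hmeasΨ : StronglyMeasurableAtFilter Ψ (nhdsWithin t (Set.Icc (0:ℝ) T)) volume :=
    ⟨Set.Icc 0 T, self_mem_nhdsWithin, hΨc.aestronglyMeasurable measurableSet_Icc⟩
  have hFTC1 : HasDerivWithinAt (fun τ => ∫ u in (0:ℝ)..τ, Ψ u) (Ψ t) (Set.Icc (0:ℝ) T) t :=
    intervalIntegral.integral_hasDerivWithinAt_right hΨint hmeasΨ (hΨc t ht)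
  have hstmteq : ∀ τ ∈ Set.Icc (0:ℝ) T,
      (∫ s in (0:ℝ)..1,
        dotp (ξ τ (g τ (c s))) (derivWithin (fun σ => g τ (c σ)) (Set.Icc 0 1) s))
      = (∫ s in (0:ℝ)..1, Fn (0, s)) + ∫ u in (0:ℝ)..τ, Ψ u := by
    intro τ hτ
    rw [← hkey τ hτ]
    apply intervalIntegral.integral_congr
    intro s hs
    rw [Set.uIcc_of_le zero_le_one] at hs
    have hBd : derivWithin (fun σ => g τ (c σ)) (Set.Icc (0:ℝ) 1) s = Hd (τ, s) (0, 1) :=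
      (hB (τ, s) ⟨hτ, hs⟩).derivWithin (hJu s hs)
    beta_reduce
    rw [hBd]
  have hmain : HasDerivWithinAt
      (fun τ => ∫ s in (0:ℝ)..1,
        dotp (ξ τ (g τ (c s))) (derivWithin (fun σ => g τ (c σ)) (Set.Icc 0 1) s))
      (Ψ t) (Set.Icc (0:ℝ) T) t := by
    apply (hFTC1.const_add (∫ s in (0:ℝ)..1, Fn (0, s))).congr
    · intro τ hτ
      exact hstmteq τ hτ
    · exact hstmteq t ht
  have hval : (∫ s in (0:ℝ)..1,
      dotp (derivWithin (fun τ => ξ τ (g t (c s))) (Set.Icc 0 T) t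
              + advDeriv (v t) (ξ t) (g t (c s))
              + lineStretch (v t) (ξ t) (g t (c s)))
           (derivWithin (fun σ => g t (c σ)) (Set.Icc 0 1) s)) = Ψ t := by
    apply intervalIntegral.integral_congr
    intro s hs
    rw [Set.uIcc_of_le zero_le_one] at hs
    have hBd : derivWithin (fun σ => g t (c σ)) (Set.Icc (0:ℝ) 1) s = Hd (t, s) (0, 1) :=
      (hB (t, s) ⟨ht, hs⟩).derivWithin (hJu s hs)
    beta_reduce
    rw [hBd]
    exact hRstmt (t, s) ⟨ht, hs⟩
  rw [hval]
  exact hmain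
end
end
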